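/- Let M_1 ≥ 0 on C^2 with eigenvalues λ_1, λ_2 ∈ [0,1] and M_2 = 𝟙 − M_1. Then ‖M_1^{⊗n} − M_2^{⊗n}‖ = max{|λ_1^n − (1−λ_1)^n|, |λ_2^n − (1−λ_2)^n|, max_{0<k<n} |λ_1^k λ_2^{n−k} − (1−λ_1)^k (1−λ_2)^{n−k}|}, and in particular ‖M_1^{⊗n} − M_2^{⊗n}‖ ≤ ‖M_1 − M_2‖ for all n ≥ 1. -/

import Mathlib

open Matrix Finset
open scoped ComplexOrder Matrix.Norms.L2Operator

/-- The `n`-fold tensor power of a `2 × 2` matrix, indexed by `Fin n → Fin 2`. -/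
def kronPow (n : ℕ) (A : Matrix (Fin 2) (Fin 2) ℂ) :
    Matrix (Fin n → Fin 2) (Fin n → Fin 2) ℂ :=
  Matrix.of fun r c => ∏ i, A (r i) (c i)

/-! ### Auxiliary scalar inequalities -/

lemma aux_pow_sub_pow_le {w : ℝ} (hw : 1/2 ≤ w) (hw1 : w ≤ 1) {n : ℕ} (hn : 1 ≤ n) :
    w ^ n - (1 - w) ^ n ≤ 2 * w - 1 := by
  obtain ⟨m, rfl⟩ : ∃ m, n = m + 1 := ⟨n - 1, by omega⟩
  set c := 1 - w with hc
  have hc0 : 0 ≤ c := by linarith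
  have hw0 : (0:ℝ) ≤ w := by linarith
  have key : w ^ (m+1) - c ^ (m+1) = (∑ i ∈ Finset.range (m+1), w ^ i * c ^ (m - i)) * (w - c) :=
    (geom_sum₂_mul w c (m+1)).symm
  have hsum : (∑ i ∈ Finset.range (m+1), w ^ i * c ^ (m - i)) ≤ 1 := by
    calc (∑ i ∈ Finset.range (m+1), w ^ i * c ^ (m - i))
        ≤ ∑ i ∈ Finset.range (m+1), w ^ i * c ^ (m - i) * (m.choose i : ℝ) := by
          apply Finset.sum_le_sum
          intro i hi
          have h1 : (1:ℝ) ≤ (m.choose i : ℝ) := by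
            have := Nat.choose_pos (Nat.lt_succ_iff.mp (Finset.mem_range.mp hi))
            exact_mod_cast this
          exact le_mul_of_one_le_right (mul_nonneg (pow_nonneg hw0 i) (pow_nonneg hc0 (m-i))) h1
      _ = (w + c) ^ m := (add_pow w c m).symm
      _ = 1 := by simp [hc]
  have hwc : 0 ≤ w - c := by rw [hc]; linarith
  calc w ^ (m+1) - c ^ (m+1) = (∑ i ∈ Finset.range (m+1), w ^ i * c ^ (m - i)) * (w - c) := key
    _ ≤ 1 * (w - c) := mul_le_mul_of_nonneg_right hsum hwc
    _ = 2 * w - 1 := by rw [hc]; ring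

lemma aux_upper {a b : ℝ} (ha0 : 0 ≤ a) (ha1 : a ≤ 1) (hb0 : 0 ≤ b) (hb1 : b ≤ 1)
    {k m : ℕ} (hn : 1 ≤ k + m) :
    a ^ k * b ^ m - (1 - a) ^ k * (1 - b) ^ m ≤ max |2 * a - 1| |2 * b - 1| := by
  set u := max a (1 - a) with hu
  set v := max b (1 - b) with hv
  set w := max u v with hw
  have hu2 : 1/2 ≤ u := by rw [hu]; rcases le_total a (1/2) with h | h
    <;> [exact le_max_of_le_right (by linarith); exact le_max_of_le_left h]
  have hw2 : 1/2 ≤ w := le_trans hu2 (le_max_left _ _)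
  have hw1 : w ≤ 1 := by
    rw [hw, hu, hv]
    simp only [max_le_iff]
    constructor <;> constructor <;> linarith
  have hw0 : (0:ℝ) ≤ w := by linarith
  have haw : a ≤ w := le_trans (le_max_left _ _) (le_max_left _ _)
  have hbw : b ≤ w := le_trans (le_max_left _ _) (le_max_right _ _)
  have h1aw : 1 - w ≤ 1 - a := by
    nlinarith [le_max_right a (1-a), le_max_left u v]
  have h1bw : 1 - w ≤ 1 - b := by
    nlinarith [le_max_right b (1-b), le_max_right u v]
  have h1w0 : (0:ℝ) ≤ 1 - w := by linarith
  have hup : a ^ k * b ^ m ≤ w ^ (k + m) := by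
    rw [pow_add]
    exact mul_le_mul (pow_le_pow_left₀ ha0 haw k) (pow_le_pow_left₀ hb0 hbw m)
      (pow_nonneg hb0 m) (pow_nonneg hw0 k)
  have hlo : (1 - w) ^ (k + m) ≤ (1 - a) ^ k * (1 - b) ^ m := by
    rw [pow_add]
    exact mul_le_mul (pow_le_pow_left₀ h1w0 h1aw k) (pow_le_pow_left₀ h1w0 h1bw m)
      (pow_nonneg h1w0 m) (pow_nonneg (by linarith) k)
  have ea : 2 * u - 1 = |2 * a - 1| := by
    rcases le_total a (1 - a) with h | h
    · rw [hu, max_eq_right h, abs_of_nonpos (by linarith)]; ring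
    · rw [hu, max_eq_left h, abs_of_nonneg (by linarith)]
  have eb : 2 * v - 1 = |2 * b - 1| := by
    rcases le_total b (1 - b) with h | h
    · rw [hv, max_eq_right h, abs_of_nonpos (by linarith)]; ring
    · rw [hv, max_eq_left h, abs_of_nonneg (by linarith)]
  have hmax : 2 * w - 1 ≤ max |2 * a - 1| |2 * b - 1| := by
    rcases max_cases u v with ⟨h, _⟩ | ⟨h, _⟩ <;> rw [hw, h]
    · rw [ea]; exact le_max_left _ _
    · rw [eb]; exact le_max_right _ _
  linarith [aux_pow_sub_pow_le hw2 hw1 hn, hup, hlo]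

lemma aux_abs {a b : ℝ} (ha0 : 0 ≤ a) (ha1 : a ≤ 1) (hb0 : 0 ≤ b) (hb1 : b ≤ 1)
    {k m : ℕ} (hn : 1 ≤ k + m) :
    |a ^ k * b ^ m - (1 - a) ^ k * (1 - b) ^ m| ≤ max |2 * a - 1| |2 * b - 1| := by
  rw [abs_le]
  refine ⟨?_, aux_upper ha0 ha1 hb0 hb1 hn⟩
  have h := aux_upper (a := 1 - a) (b := 1 - b) (by linarith) (by linarith)
    (by linarith) (by linarith) hn
  have e1 : (1:ℝ) - (1 - a) = a := by ring
  have e2 : (1:ℝ) - (1 - b) = b := by ring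
  rw [e1, e2] at h
  have e3 : |2 * (1 - a) - 1| = |2 * a - 1| := by
    rw [show 2 * (1 - a) - 1 = -(2 * a - 1) by ring, abs_neg]
  have e4 : |2 * (1 - b) - 1| = |2 * b - 1| := by
    rw [show 2 * (1 - b) - 1 = -(2 * b - 1) by ring, abs_neg]
  rw [e3, e4] at h
  linarith

/-! ### Auxiliary matrix lemmas -/

lemma kronPow_mul (n : ℕ) (A B : Matrix (Fin 2) (Fin 2) ℂ) :
    kronPow n (A * B) = kronPow n A * kronPow n B := by
  ext r c
  simp only [kronPow, Matrix.mul_apply, of_apply]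
  rw [Finset.prod_univ_sum]
  rw [show Fintype.piFinset (fun _ : Fin n => (Finset.univ : Finset (Fin 2))) = Finset.univ from rfl]
  exact Finset.sum_congr rfl fun f _ => by rw [Finset.prod_mul_distrib]

lemma kronPow_conjTranspose (n : ℕ) (A : Matrix (Fin 2) (Fin 2) ℂ) :
    kronPow n Aᴴ = (kronPow n A)ᴴ := by
  ext r c
  simp only [kronPow, conjTranspose_apply, of_apply]
  exact (star_prod _ _).symm

lemma kronPow_diagonal (n : ℕ) (d : Fin 2 → ℂ) :
    kronPow n (diagonal d) = diagonal (fun r : Fin n → Fin 2 => ∏ i, d (r i)) := by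
  ext r c
  simp only [kronPow, of_apply]
  by_cases h : r = c
  · subst h
    simp [diagonal_apply_eq]
  · obtain ⟨i, hi⟩ : ∃ i, r i ≠ c i := Function.ne_iff.mp h
    rw [diagonal_apply_ne _ h]
    exact Finset.prod_eq_zero (Finset.mem_univ i) (diagonal_apply_ne _ hi)

lemma kronPow_one (n : ℕ) : kronPow n (1 : Matrix (Fin 2) (Fin 2) ℂ) = 1 := by
  rw [← diagonal_one, kronPow_diagonal]
  simp

lemma l2_opNorm_diagonal {ι : Type*} [Fintype ι] [DecidableEq ι] [Nonempty ι] (d : ι → ℂ) :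
    ‖(diagonal d : Matrix ι ι ℂ)‖ =
      Finset.univ.sup' Finset.univ_nonempty (fun i => ‖d i‖) := by
  set C := Finset.univ.sup' Finset.univ_nonempty (fun i => ‖d i‖) with hC
  have hC0 : 0 ≤ C := by
    obtain ⟨i⟩ := ‹Nonempty ι›
    refine le_trans (norm_nonneg (d i)) ?_
    rw [hC]; exact Finset.le_sup' (fun j => ‖d j‖) (Finset.mem_univ i)
  apply le_antisymm
  · rw [Matrix.l2_opNorm_def]
    apply ContinuousLinearMap.opNorm_le_bound _ hC0
    intro x
    simp only [LinearEquiv.trans_apply, LinearMap.coe_toContinuousLinearMap']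
    rw [toEuclideanLin_apply]
    rw [EuclideanSpace.norm_eq]
    have hx : ‖x‖ = √(∑ i, ‖x i‖ ^ 2) := EuclideanSpace.norm_eq x
    rw [hx, ← Real.sqrt_sq hC0, ← Real.sqrt_mul (sq_nonneg C)]
    apply Real.sqrt_le_sqrt
    rw [Finset.mul_sum]
    apply Finset.sum_le_sum
    intro i _
    have : (WithLp.toLp 2 (diagonal d *ᵥ x.ofLp)).ofLp i
        = d i * x i := by
      simp [mulVec_diagonal]
    rw [this, norm_mul, mul_pow]
    have hd : ‖d i‖ ≤ C := by
      rw [hC]; exact Finset.le_sup' (fun j => ‖d j‖) (Finset.mem_univ i)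
    have h2 : ‖d i‖ ^ 2 ≤ C ^ 2 := by nlinarith [norm_nonneg (d i)]
    exact mul_le_mul_of_nonneg_right h2 (sq_nonneg _)
  · apply Finset.sup'_le
    intro i _
    have key := Matrix.l2_opNorm_mulVec (diagonal d) (EuclideanSpace.single i 1)
    have h1 : diagonal d *ᵥ (EuclideanSpace.single i (1:ℂ) : EuclideanSpace ℂ ι)
        = Pi.single i (d i) := by
      rw [show ((EuclideanSpace.single i (1:ℂ)) : ι → ℂ) = Pi.single i 1 from rfl]
      rw [diagonal_mulVec_single]
      simp
    have h2 : ‖(EuclideanSpace.equiv ι ℂ).symm (diagonal d *ᵥ (EuclideanSpace.single i (1:ℂ) : EuclideanSpace ℂ ι))‖ = ‖d i‖ := by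
      rw [h1]
      exact EuclideanSpace.norm_single i (d i)
    have h3 : ‖(EuclideanSpace.single i (1:ℂ) : EuclideanSpace ℂ ι)‖ = 1 := by
      rw [EuclideanSpace.norm_single]; simp
    calc ‖d i‖ = ‖(EuclideanSpace.equiv ι ℂ).symm (diagonal d *ᵥ (EuclideanSpace.single i (1:ℂ) : EuclideanSpace ℂ ι))‖ := h2.symm
      _ ≤ ‖diagonal d‖ * ‖(EuclideanSpace.single i (1:ℂ) : EuclideanSpace ℂ ι)‖ := key
      _ = ‖diagonal d‖ := by rw [h3, mul_one]

lemma l2_opNorm_unitary_conj {ι : Type*} [Fintype ι] [DecidableEq ι]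
    (U A : Matrix ι ι ℂ) (hU : Uᴴ * U = 1) : ‖U * A * Uᴴ‖ = ‖A‖ := by
  have hU' : U ∈ unitary (Matrix ι ι ℂ) := by
    rw [Unitary.mem_iff, Matrix.star_eq_conjTranspose]
    exact ⟨hU, mul_eq_one_comm.mp hU⟩
  have hUc : Uᴴ ∈ unitary (Matrix ι ι ℂ) := by
    rw [← Matrix.star_eq_conjTranspose]
    exact Unitary.star_mem hU'
  calc ‖U * A * Uᴴ‖ = ‖U * (A * Uᴴ)‖ := by rw [mul_assoc]
    _ = ‖A * Uᴴ‖ := CStarRing.norm_coe_unitary_mul (⟨U, hU'⟩ : unitary (Matrix ι ι ℂ)) _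
    _ = ‖A‖ := CStarRing.norm_mul_coe_unitary _ (⟨Uᴴ, hUc⟩ : unitary (Matrix ι ι ℂ))

lemma fin2_eq_one {x : Fin 2} (h : x ≠ 0) : x = 1 := by fin_cases x <;> simp_all

lemma prod_fin2 {n : ℕ} (c : Fin 2 → ℝ) (r : Fin n → Fin 2) :
    ∏ i, c (r i) = c 0 ^ (univ.filter fun i => r i = 0).card *
      c 1 ^ (n - (univ.filter fun i => r i = 0).card) := by
  classical
  rw [← Finset.prod_filter_mul_prod_filter_not univ (fun i => r i = 0)]
  congr 1
  · rw [Finset.prod_congr rfl (fun i hi => by rw [(Finset.mem_filter.mp hi).2]),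
      Finset.prod_const]
  · rw [Finset.prod_congr rfl (fun i hi => by rw [fin2_eq_one (Finset.mem_filter.mp hi).2]),
      Finset.prod_const]
    congr 1
    have h := Finset.card_filter_add_card_filter_not (s := univ)
      (p := fun i : Fin n => r i = 0)
    simp only [Finset.card_univ, Fintype.card_fin] at h
    omega

lemma card_filter_lt {n k : ℕ} (hk : k ≤ n) :
    (univ.filter fun i : Fin n => (i : ℕ) < k).card = k := by
  have : (univ.filter fun i : Fin n => (i : ℕ) < k) =
      (Finset.range k).attachFin (fun m hm => lt_of_lt_of_le (Finset.mem_range.mp hm) hk) := by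
    ext i
    simp [Finset.mem_attachFin]
  rw [this, Finset.card_attachFin, Finset.card_range]

/-- For a binary qubit observable with `M₁` having eigenvalues `λ₁, λ₂ ∈ [0,1]` and
`M₂ = 𝟙 − M₁`, the operator norm of `M₁^{⊗n} − M₂^{⊗n}` equals the maximum over
`0 ≤ k ≤ n` of `|λ₁^k λ₂^{n−k} − (1−λ₁)^k (1−λ₂)^{n−k}|` (the cases `k = n`, `k = 0`
being the endpoint terms `|λᵢⁿ − (1−λᵢ)ⁿ|`), and in particular
`‖M₁^{⊗n} − M₂^{⊗n}‖ ≤ ‖M₁ − M₂‖` for all `n ≥ 1`. -/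
theorem multishot_norm_formula
    {n : ℕ} (hn : 1 ≤ n)
    (e : Fin 2 → (Fin 2 → ℂ)) (lam : Fin 2 → ℝ)
    (horth : ∀ i j, star (e i) ⬝ᵥ e j = if i = j then 1 else 0)
    (hlam : ∀ i, 0 ≤ lam i ∧ lam i ≤ 1)
    (M₁ M₂ : Matrix (Fin 2) (Fin 2) ℂ)
    (hM₁ : M₁ = ∑ i, (lam i : ℂ) • vecMulVec (e i) (star (e i)))
    (hM₂ : M₂ = 1 - M₁) :
    ‖kronPow n M₁ - kronPow n M₂‖ =
      (Finset.range (n + 1)).sup' ⟨0, by simp⟩ (fun k =>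
        |lam 0 ^ k * lam 1 ^ (n - k) - (1 - lam 0) ^ k * (1 - lam 1) ^ (n - k)|) ∧
    ‖kronPow n M₁ - kronPow n M₂‖ ≤ ‖M₁ - M₂‖ := by
  classical
  set U : Matrix (Fin 2) (Fin 2) ℂ := of fun i j => e j i with hUdef
  have hUU : Uᴴ * U = 1 := by
    ext i j
    rw [Matrix.mul_apply]
    have := horth i j
    simp only [dotProduct, Pi.star_apply] at this
    simpa [hUdef, conjTranspose_apply, of_apply, Matrix.one_apply] using this
  have hUUc : U * Uᴴ = 1 := mul_eq_one_comm.mp hUU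
  have hM1' : M₁ = U * diagonal (fun i => (lam i : ℂ)) * Uᴴ := by
    rw [hM₁]
    ext a b
    simp only [hUdef, Matrix.sum_apply, Matrix.smul_apply, vecMulVec_apply, Pi.star_apply,
      smul_eq_mul, Matrix.mul_apply, diagonal_apply, conjTranspose_apply, of_apply,
      ite_mul, zero_mul, mul_ite, mul_zero, Finset.sum_ite_eq, Finset.sum_ite_eq',
      Finset.mem_univ, if_true]
    exact Finset.sum_congr rfl fun j _ => by ring
  have hM2' : M₂ = U * diagonal (fun i => 1 - (lam i : ℂ)) * Uᴴ := by
    have hd : diagonal (fun i : Fin 2 => 1 - (lam i : ℂ))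
        = 1 - diagonal (fun i : Fin 2 => (lam i : ℂ)) := by
      rw [← diagonal_one, ← diagonal_sub]
    rw [hM₂, hM1', hd, Matrix.mul_sub, Matrix.mul_one, Matrix.sub_mul, hUUc]
  -- the tensor-power decomposition
  set W : Matrix (Fin n → Fin 2) (Fin n → Fin 2) ℂ := kronPow n U with hWdef
  have hWW : Wᴴ * W = 1 := by
    rw [hWdef, ← kronPow_conjTranspose, ← kronPow_mul, hUU, kronPow_one]
  set dC : (Fin n → Fin 2) → ℂ :=
    fun r => (((∏ i, lam (r i)) - ∏ i, (1 - lam (r i)) : ℝ) : ℂ) with hdC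
  have hkd : kronPow n M₁ - kronPow n M₂ = W * diagonal dC * Wᴴ := by
    rw [hM1', hM2', kronPow_mul, kronPow_mul, kronPow_mul, kronPow_mul,
      kronPow_conjTranspose, kronPow_diagonal, kronPow_diagonal, ← hWdef]
    rw [← Matrix.sub_mul, ← Matrix.mul_sub, diagonal_sub]
    congr 2
    funext r
    simp only [hdC]
    push_cast
    ring
  have hnonempty : Nonempty (Fin n → Fin 2) := inferInstance
  have hnorm1 : ‖kronPow n M₁ - kronPow n M₂‖
      = Finset.univ.sup' Finset.univ_nonempty (fun r => ‖dC r‖) := by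
    rw [hkd, l2_opNorm_unitary_conj _ _ hWW, _root_.l2_opNorm_diagonal]
  set g : ℕ → ℝ := fun k =>
    |lam 0 ^ k * lam 1 ^ (n - k) - (1 - lam 0) ^ k * (1 - lam 1) ^ (n - k)| with hg
  have hval : ∀ r : Fin n → Fin 2,
      ‖dC r‖ = g ((univ.filter fun i => r i = 0).card) := by
    intro r
    rw [hdC]
    rw [Complex.norm_real, Real.norm_eq_abs, prod_fin2 lam r,
      prod_fin2 (fun j => 1 - lam j) r]
  have hcard_le : ∀ r : Fin n → Fin 2, (univ.filter fun i => r i = 0).card ≤ n := by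
    intro r
    calc (univ.filter fun i => r i = 0).card ≤ (univ : Finset (Fin n)).card :=
          Finset.card_filter_le _ _
      _ = n := by simp
  have hsup_eq : Finset.univ.sup' Finset.univ_nonempty (fun r : Fin n → Fin 2 => ‖dC r‖)
      = (Finset.range (n + 1)).sup' ⟨0, by simp⟩ g := by
    apply le_antisymm
    · apply Finset.sup'_le
      intro r _
      rw [hval r]
      exact Finset.le_sup' g (Finset.mem_range.mpr (Nat.lt_succ_of_le (hcard_le r)))
    · apply Finset.sup'_le
      intro k hk
      have hkn : k ≤ n := Nat.lt_succ_iff.mp (Finset.mem_range.mp hk)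
      set r : Fin n → Fin 2 := fun i => if (i : ℕ) < k then 0 else 1 with hr
      have hrk : (univ.filter fun i => r i = 0).card = k := by
        have : (univ.filter fun i => r i = 0) = (univ.filter fun i : Fin n => (i : ℕ) < k) := by
          apply Finset.filter_congr
          intro i _
          show (if (i : ℕ) < k then (0 : Fin 2) else 1) = 0 ↔ (i : ℕ) < k
          split_ifs with h <;> simp [h]
        rw [this, card_filter_lt hkn]
      have := hval r
      rw [hrk] at this
      rw [← this]
      exact Finset.le_sup' (fun r => ‖dC r‖) (Finset.mem_univ r)
  have part1 : ‖kronPow n M₁ - kronPow n M₂‖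
      = (Finset.range (n + 1)).sup' ⟨0, by simp⟩ g := by rw [hnorm1, hsup_eq]
  refine ⟨part1, ?_⟩
  -- second part
  have hM12 : M₁ - M₂ = U * diagonal (fun i => ((2 * lam i - 1 : ℝ) : ℂ)) * Uᴴ := by
    rw [hM1', hM2', ← Matrix.sub_mul, ← Matrix.mul_sub, diagonal_sub]
    exact congrArg (fun v => U * diagonal v * Uᴴ) (funext fun i => by push_cast; ring)
  have hnorm2 : ‖M₁ - M₂‖
      = Finset.univ.sup' Finset.univ_nonempty (fun i : Fin 2 => ‖((2 * lam i - 1 : ℝ) : ℂ)‖) := by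
    rw [hM12, l2_opNorm_unitary_conj _ _ hUU, _root_.l2_opNorm_diagonal]
  have hmaxle : max |2 * lam 0 - 1| |2 * lam 1 - 1| ≤ ‖M₁ - M₂‖ := by
    rw [hnorm2]
    apply max_le
    · have := Finset.le_sup' (fun i : Fin 2 => ‖((2 * lam i - 1 : ℝ) : ℂ)‖) (Finset.mem_univ 0)
      rwa [Complex.norm_real, Real.norm_eq_abs] at this
    · have := Finset.le_sup' (fun i : Fin 2 => ‖((2 * lam i - 1 : ℝ) : ℂ)‖) (Finset.mem_univ 1)
      rwa [Complex.norm_real, Real.norm_eq_abs] at this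
  rw [part1]
  apply le_trans _ hmaxle
  apply Finset.sup'_le
  intro k hk
  have hkn : k ≤ n := Nat.lt_succ_iff.mp (Finset.mem_range.mp hk)
  have h1 : 1 ≤ k + (n - k) := by omega
  exact aux_abs (hlam 0).1 (hlam 0).2 (hlam 1).1 (hlam 1).2 h1
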